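/- Let X be a locally compact, σ-compact metrizable topological space and let φ be an action of a group G on X. Then φ is metric-independent expansive (MIE) if and only if φ is cocompactly expansive. -/

import Mathlib

/-- An action `φ` is expansive with respect to a distance function `d`:
there is `c > 0` such that any two distinct points are separated beyond `c`
by some group element. -/
def ExpansiveWith {G X : Type*} (φ : G → X → X) (d : X → X → ℝ) : Prop :=
  ∃ c > 0, ∀ x y : X, x ≠ y → ∃ g : G, c < d (φ g x) (φ g y)

/-- Metric-independent expansiveness: expansive with respect to every metric
compatible with the topology. -/
def MIE {G X : Type*} [tX : TopologicalSpace X] (φ : G → X → X) : Prop :=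
  ∀ m : MetricSpace X, m.toUniformSpace.toTopologicalSpace = tX →
    ExpansiveWith φ (fun x y => @dist X m.toDist x y)

/-- Cocompact expansiveness: there are a finite open cover `𝒰` and a compact set `K`
with `G ⬝ K = X` such that if for all `g` the pair `{g⬝x, g⬝y}` is contained in a member
of `𝒰 ∪ {X \ K}`, then `x = y`. -/
def CocompactlyExpansive {G X : Type*} [TopologicalSpace X] (φ : G → X → X) : Prop :=
  ∃ (𝒰 : Finset (Set X)) (K : Set X),
    (∀ U ∈ 𝒰, IsOpen U) ∧ (∀ x : X, ∃ U ∈ 𝒰, x ∈ U) ∧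
    IsCompact K ∧ (∀ x : X, ∃ g : G, ∃ k ∈ K, x = φ g k) ∧
    (∀ x y : X, (∀ g : G, (∃ U ∈ 𝒰, φ g x ∈ U ∧ φ g y ∈ U) ∨ (φ g x ∉ K ∧ φ g y ∉ K)) →
      x = y)

/-- Cocompact expansiveness implies expansiveness w.r.t. the given metric:
Lebesgue number argument. -/
theorem expansiveWith_of_CE {G X : Type*} [MetricSpace X] (φ : G → X → X)
    (h : CocompactlyExpansive φ) : ExpansiveWith φ (fun x y : X => dist x y) := by
  obtain ⟨𝒰, K, hop, hcov, hK, -, hsep⟩ := h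
  have hcovK : K ⊆ ⋃ U : {V : Set X // V ∈ 𝒰}, U.val := by
    intro x _
    obtain ⟨U, hU, hxU⟩ := hcov x
    exact Set.mem_iUnion.2 ⟨⟨U, hU⟩, hxU⟩
  obtain ⟨δ, hδ, hleb⟩ := lebesgue_number_lemma_of_metric
    (c := fun U : {V : Set X // V ∈ 𝒰} => U.val) hK (fun U => hop U.val U.property) hcovK
  refine ⟨δ / 2, by positivity, fun x y hne => ?_⟩
  by_contra hcon
  push_neg at hcon
  refine hne (hsep x y fun g => ?_)
  by_cases hx : φ g x ∈ K
  · obtain ⟨U, hUb⟩ := hleb _ hx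
    refine Or.inl ⟨U.val, U.property, hUb (Metric.mem_ball_self hδ), hUb (Metric.mem_ball.2 ?_)⟩
    have := hcon g
    rw [dist_comm]
    linarith
  · by_cases hy : φ g y ∈ K
    · obtain ⟨U, hUb⟩ := hleb _ hy
      refine Or.inl ⟨U.val, U.property, hUb (Metric.mem_ball.2 ?_), hUb (Metric.mem_ball_self hδ)⟩
      have := hcon g
      linarith
    · exact Or.inr ⟨hx, hy⟩

/-- From failure of cocompact expansiveness and a cocompactness witness,
obtain badly-separated pairs. -/
theorem pairs_of_not_CE {G X : Type*} [Group G] [MetricSpace X] (φ : G → X → X)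
    (hCE : ¬ CocompactlyExpansive φ)
    {C₀ : Set X} (hC₀ : IsCompact C₀) (hGC₀ : ∀ x : X, ∃ g : G, ∃ k ∈ C₀, x = φ g k)
    {K : Set X} (hK : IsCompact K) {ε : ℝ} (hε : 0 < ε) :
    ∃ x y : X, x ≠ y ∧ ∀ g : G,
      dist (φ g x) (φ g y) < 2 * ε ∨ (φ g x ∉ K ∧ φ g y ∉ K) := by
  classical
  have hCcpt : IsCompact (C₀ ∪ K) := hC₀.union hK
  obtain ⟨t, ht⟩ := hCcpt.elim_finite_subcover (fun p : X => Metric.ball p ε)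
    (fun _ => Metric.isOpen_ball)
    (fun x _ => Set.mem_iUnion.2 ⟨x, Metric.mem_ball_self hε⟩)
  set 𝒰 : Finset (Set X) := insert (C₀ ∪ K)ᶜ (t.image fun p => Metric.ball p ε) with h𝒰
  have hop : ∀ U ∈ 𝒰, IsOpen U := by
    intro U hU
    rcases Finset.mem_insert.1 hU with rfl | hU
    · exact hCcpt.isClosed.isOpen_compl
    · obtain ⟨p, -, rfl⟩ := Finset.mem_image.1 hU
      exact Metric.isOpen_ball
  have hcov : ∀ x : X, ∃ U ∈ 𝒰, x ∈ U := by
    intro x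
    by_cases hx : x ∈ C₀ ∪ K
    · obtain ⟨p, hp, hxp⟩ := Set.mem_iUnion₂.1 (ht hx)
      exact ⟨Metric.ball p ε,
        Finset.mem_insert.2 (Or.inr (Finset.mem_image.2 ⟨p, hp, rfl⟩)), hxp⟩
    · exact ⟨(C₀ ∪ K)ᶜ, Finset.mem_insert_self _ _, hx⟩
  have hGC : ∀ x : X, ∃ g : G, ∃ k ∈ C₀ ∪ K, x = φ g k := by
    intro x
    obtain ⟨g, k, hk, hx⟩ := hGC₀ x
    exact ⟨g, k, Or.inl hk, hx⟩
  have hsep : ¬ (∀ x y : X,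
      (∀ g : G, (∃ U ∈ 𝒰, φ g x ∈ U ∧ φ g y ∈ U) ∨
        (φ g x ∉ C₀ ∪ K ∧ φ g y ∉ C₀ ∪ K)) → x = y) := by
    intro hsep
    exact hCE ⟨𝒰, C₀ ∪ K, hop, hcov, hCcpt, hGC, hsep⟩
  push_neg at hsep
  obtain ⟨x, y, hxy, hne⟩ := hsep
  refine ⟨x, y, hne, fun g => ?_⟩
  rcases hxy g with ⟨U, hU, hxU, hyU⟩ | ⟨hx, hy⟩
  · rcases Finset.mem_insert.1 hU with rfl | hU
    · exact Or.inr ⟨fun h => hxU (Or.inr h), fun h => hyU (Or.inr h)⟩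
    · obtain ⟨p, -, rfl⟩ := Finset.mem_image.1 hU
      refine Or.inl ?_
      have h1 : dist (φ g x) p < ε := Metric.mem_ball.1 hxU
      have h2 : dist (φ g y) p < ε := Metric.mem_ball.1 hyU
      have h3 := dist_triangle (φ g x) p (φ g y)
      have h4 : dist p (φ g y) = dist (φ g y) p := dist_comm _ _
      linarith
  · exact Or.inr ⟨fun h => hx (Or.inr h), fun h => hy (Or.inr h)⟩

/-- If the action is not cocompact, there are two distinct points whose
orbits avoid any given compact set. -/
theorem pairs_of_not_cocompact {G X : Type*} [Group G] [TopologicalSpace X] (φ : G → X → X)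
    (hone : ∀ x : X, φ 1 x = x)
    (hmul : ∀ (g h : G) (x : X), φ (g * h) x = φ g (φ h x))
    (hncc : ¬ ∃ C : Set X, IsCompact C ∧ ∀ x : X, ∃ g : G, ∃ k ∈ C, x = φ g k)
    {K : Set X} (hK : IsCompact K) :
    ∃ x y : X, x ≠ y ∧ (∀ g : G, φ g x ∉ K) ∧ (∀ g : G, φ g y ∉ K) := by
  set S : Set X := {z | ∃ g : G, ∃ k ∈ K, z = φ g k} with hS
  have horb : ∀ z : X, z ∉ S → ∀ g : G, φ g z ∉ K := by
    intro z hz g hgz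
    refine hz ⟨g⁻¹, φ g z, hgz, ?_⟩
    rw [← hmul, inv_mul_cancel, hone]
  have h1 : ∃ p, p ∉ S := by
    by_contra h
    push_neg at h
    exact hncc ⟨K, hK, fun x => h x⟩
  obtain ⟨p, hp⟩ := h1
  by_cases h2 : ∃ q, q ∉ S ∧ q ≠ p
  · obtain ⟨q, hq, hqp⟩ := h2
    exact ⟨q, p, hqp, horb q hq, horb p hp⟩
  · push_neg at h2
    exfalso
    apply hncc
    refine ⟨K ∪ {p}, hK.union isCompact_singleton, fun x => ?_⟩
    by_cases hx : x ∈ S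
    · obtain ⟨g, k, hk, hxk⟩ := hx
      exact ⟨g, k, Or.inl hk, hxk⟩
    · exact ⟨1, p, Or.inr rfl, by rw [h2 x hx, hone]⟩

/-- On a noncompact, locally compact, σ-compact metric space there is a positive
`1`-Lipschitz function decaying along a compact exhaustion. -/
theorem exists_rho {X : Type*} [MetricSpace X] [LocallyCompactSpace X] [SigmaCompactSpace X]
    (hnc : ¬ CompactSpace X) :
    ∃ (E : CompactExhaustion X) (ρ : X → ℝ),
      (∀ x, 0 < ρ x) ∧ (∀ x y : X, ρ x ≤ ρ y + dist x y) ∧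
      (∀ (n : ℕ) (x : X), x ∉ E (n + 1) → ρ x ≤ 1 / ((n : ℝ) + 1)) := by
  obtain ⟨E⟩ : Nonempty (CompactExhaustion X) := ⟨CompactExhaustion.choice X⟩
  set g : ℕ → X → ℝ :=
    fun n x => 1 / ((n : ℝ) + 1) + Metric.infDist x ((interior (E (n + 1)))ᶜ) with hg
  have gnonneg : ∀ n x, 0 ≤ g n x := fun n x =>
    add_nonneg (by positivity) Metric.infDist_nonneg
  have hbdd : ∀ x, BddBelow (Set.range fun n => g n x) := by
    intro x
    refine ⟨0, ?_⟩
    rintro v ⟨n, rfl⟩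
    exact gnonneg n x
  set ρ : X → ℝ := fun x => ⨅ n, g n x with hρ
  have hle : ∀ n x, ρ x ≤ g n x := fun n x => ciInf_le (hbdd x) n
  have hcne : ∀ n : ℕ, ((interior (E (n + 1)))ᶜ : Set X).Nonempty := by
    intro n
    rcases Set.eq_empty_or_nonempty ((interior (E (n + 1)))ᶜ : Set X) with h | h
    · exfalso
      apply hnc
      have huniv : (interior (E (n + 1)) : Set X) = Set.univ := by
        rwa [Set.compl_empty_iff] at h
      have hsub : (Set.univ : Set X) ⊆ E (n + 1) := by
        rw [← huniv]; exact interior_subset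
      exact isCompact_univ_iff.1 ((E.isCompact (n + 1)).of_isClosed_subset isClosed_univ hsub)
    · exact h
  have hpos : ∀ x, 0 < ρ x := by
    intro x
    obtain ⟨m, hm⟩ := E.exists_mem x
    have hxint : x ∈ interior (E (m + 1)) := E.subset_interior_succ m hm
    have hδ : 0 < Metric.infDist x ((interior (E (m + 1)))ᶜ) := by
      rw [← (isOpen_interior.isClosed_compl).notMem_iff_infDist_pos (hcne m)]
      simpa using hxint
    have hmin : min (Metric.infDist x ((interior (E (m + 1)))ᶜ)) (1 / ((m : ℝ) + 1)) ≤ ρ x := by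
      apply le_ciInf
      intro n
      rcases le_or_gt m n with h | h
      · have hsub : ((interior (E (n + 1)))ᶜ : Set X) ⊆ (interior (E (m + 1)))ᶜ :=
          Set.compl_subset_compl.2 (interior_mono (E.subset (by omega)))
        have hdd := Metric.infDist_le_infDist_of_subset (x := x) hsub (hcne n)
        have h0 : (0 : ℝ) ≤ 1 / ((n : ℝ) + 1) := by positivity
        have hminle := min_le_left (Metric.infDist x ((interior (E (m + 1)))ᶜ))
          (1 / ((m : ℝ) + 1))
        simp only [hg]
        linarith
      · have hmn : 1 / ((m : ℝ) + 1) ≤ 1 / ((n : ℝ) + 1) := by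
          apply one_div_le_one_div_of_le (by positivity)
          have : (n : ℝ) ≤ (m : ℝ) := by exact_mod_cast h.le
          linarith
        have hminle := min_le_right (Metric.infDist x ((interior (E (m + 1)))ᶜ))
          (1 / ((m : ℝ) + 1))
        have h0 : (0 : ℝ) ≤ Metric.infDist x ((interior (E (n + 1)))ᶜ) :=
          Metric.infDist_nonneg
        simp only [hg]
        linarith
    have : 0 < min (Metric.infDist x ((interior (E (m + 1)))ᶜ)) (1 / ((m : ℝ) + 1)) :=
      lt_min hδ (by positivity)
    linarith
  have hlip : ∀ x y : X, ρ x ≤ ρ y + dist x y := by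
    intro x y
    rw [← sub_le_iff_le_add]
    apply le_ciInf
    intro n
    have h1 : ρ x ≤ g n x := hle n x
    have h2 : Metric.infDist x ((interior (E (n + 1)))ᶜ) ≤
        Metric.infDist y ((interior (E (n + 1)))ᶜ) + dist x y :=
      Metric.infDist_le_infDist_add_dist
    simp only [hg] at h1 ⊢
    linarith
  have hdecay : ∀ (n : ℕ) (x : X), x ∉ E (n + 1) → ρ x ≤ 1 / ((n : ℝ) + 1) := by
    intro n x hx
    have hxc : x ∈ ((interior (E (n + 1)))ᶜ : Set X) := fun hxint =>
      hx (interior_subset hxint)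
    have : g n x = 1 / ((n : ℝ) + 1) := by
      simp only [hg, Metric.infDist_zero_of_mem hxc, add_zero]
    calc ρ x ≤ g n x := hle n x
      _ = 1 / ((n : ℝ) + 1) := this
  exact ⟨E, ρ, hpos, hlip, hdecay⟩

/-- If cocompact expansiveness fails, some compatible metric is not expansive. -/
theorem not_expansive_aux {G X : Type*} [Group G] [m₀ : MetricSpace X]
    [LocallyCompactSpace X] [SigmaCompactSpace X]
    (φ : G → X → X) (hone : ∀ x : X, φ 1 x = x)
    (hmul : ∀ (g h : G) (x : X), φ (g * h) x = φ g (φ h x))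
    (hCE : ¬ CocompactlyExpansive φ) :
    ∃ m : MetricSpace X,
      m.toUniformSpace.toTopologicalSpace = m₀.toUniformSpace.toTopologicalSpace ∧
      ¬ ExpansiveWith φ (fun x y => @dist X m.toDist x y) := by
  by_cases hcs : CompactSpace X
  · refine ⟨m₀, rfl, ?_⟩
    rintro ⟨c, hc, hexp⟩
    obtain ⟨n, hn⟩ := exists_nat_gt (2 / c)
    have hn1 : (0 : ℝ) < (n : ℝ) + 1 := by positivity
    have h2n : 2 / ((n : ℝ) + 1) < c := by
      rw [div_lt_iff₀ hn1]
      rw [div_lt_iff₀ hc] at hn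
      nlinarith
    obtain ⟨x, y, hne, hg⟩ := pairs_of_not_CE φ hCE isCompact_univ
      (fun x => ⟨1, x, trivial, (hone x).symm⟩) isCompact_univ
      (show (0 : ℝ) < 1 / ((n : ℝ) + 1) by positivity)
    obtain ⟨g, hgc⟩ := hexp x y hne
    rcases hg g with h | h
    · have h21 : 2 * (1 / ((n : ℝ) + 1)) = 2 / ((n : ℝ) + 1) := by ring
      simp only at hgc
      linarith
    · exact h.1 trivial
  · obtain ⟨E, ρ, hpos, hlip, hdecay⟩ := exists_rho hcs
    have dself : ∀ x : X, min (dist x x) (ρ x + ρ x) = 0 := by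
      intro x
      have := (hpos x).le
      rw [dist_self]
      exact min_eq_left (by linarith)
    have dcomm : ∀ x y : X, min (dist x y) (ρ x + ρ y) = min (dist y x) (ρ y + ρ x) := by
      intro x y
      rw [dist_comm, add_comm]
    have dtri : ∀ x y z : X, min (dist x z) (ρ x + ρ z) ≤
        min (dist x y) (ρ x + ρ y) + min (dist y z) (ρ y + ρ z) := by
      intro x y z
      have l1 : ρ x ≤ ρ y + dist x y := hlip x y
      have l3 : ρ z ≤ ρ y + dist y z := by
        have := hlip z y; rwa [dist_comm z y] at this
      have t := dist_triangle x y z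
      have hxz1 : min (dist x z) (ρ x + ρ z) ≤ dist x z := min_le_left _ _
      have hxz2 : min (dist x z) (ρ x + ρ z) ≤ ρ x + ρ z := min_le_right _ _
      have hy := (hpos y).le
      rcases le_total (dist x y) (ρ x + ρ y) with h1 | h1 <;>
        rcases le_total (dist y z) (ρ y + ρ z) with h2 | h2
      · rw [min_eq_left h1, min_eq_left h2]; linarith
      · rw [min_eq_left h1, min_eq_right h2]; linarith
      · rw [min_eq_right h1, min_eq_left h2]; linarith
      · rw [min_eq_right h1, min_eq_right h2]; linarith
    have deq : ∀ x y : X, min (dist x y) (ρ x + ρ y) = 0 → x = y := by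
      intro x y h
      by_contra hne
      have h1 : 0 < dist x y := dist_pos.2 hne
      have h2 : 0 < ρ x + ρ y := by linarith [hpos x, hpos y]
      have := lt_min h1 h2
      rw [h] at this
      exact lt_irrefl 0 this
    have H : ∀ s : Set X, IsOpen s ↔
        ∀ x ∈ s, ∃ ε > 0, ∀ y, min (dist x y) (ρ x + ρ y) < ε → y ∈ s := by
      intro s
      rw [Metric.isOpen_iff]
      constructor
      · intro h x hx
        obtain ⟨ε, hε, hb⟩ := h x hx
        refine ⟨min ε (ρ x), lt_min hε (hpos x), fun y hy => ?_⟩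
        have hd : dist x y < ε := by
          rcases le_total (dist x y) (ρ x + ρ y) with h' | h'
          · rw [min_eq_left h'] at hy
            exact lt_of_lt_of_le hy (min_le_left _ _)
          · rw [min_eq_right h'] at hy
            have h'' : ρ x + ρ y < ρ x := lt_of_lt_of_le hy (min_le_right _ _)
            linarith [hpos y]
        exact hb (Metric.mem_ball.2 (by rwa [dist_comm]))
      · intro h x hx
        obtain ⟨ε, hε, hb⟩ := h x hx
        refine ⟨ε, hε, fun y hy => ?_⟩
        have : dist y x < ε := Metric.mem_ball.1 hy
        refine hb y ?_
        calc min (dist x y) (ρ x + ρ y) ≤ dist x y := min_le_left _ _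
          _ = dist y x := dist_comm _ _
          _ < ε := this
    refine ⟨MetricSpace.ofDistTopology (fun x y => min (dist x y) (ρ x + ρ y))
      dself dcomm dtri H deq, rfl, ?_⟩
    rintro ⟨c, hc, hexp⟩
    obtain ⟨n, hn⟩ := exists_nat_gt (2 / c)
    have hn1 : (0 : ℝ) < (n : ℝ) + 1 := by positivity
    have h2n : 2 / ((n : ℝ) + 1) < c := by
      rw [div_lt_iff₀ hn1]
      rw [div_lt_iff₀ hc] at hn
      nlinarith
    have hpair : ∃ x y : X, x ≠ y ∧ ∀ g : G,
        dist (φ g x) (φ g y) < 2 * (1 / ((n : ℝ) + 1)) ∨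
          (φ g x ∉ E (n + 1) ∧ φ g y ∉ E (n + 1)) := by
      by_cases hcc : ∃ C : Set X, IsCompact C ∧ ∀ x : X, ∃ g : G, ∃ k ∈ C, x = φ g k
      · obtain ⟨C₀, hC₀, hGC₀⟩ := hcc
        exact pairs_of_not_CE φ hCE hC₀ hGC₀ (E.isCompact (n + 1)) (by positivity)
      · obtain ⟨x, y, hne, hx, hy⟩ := pairs_of_not_cocompact φ hone hmul hcc
          (E.isCompact (n + 1))
        exact ⟨x, y, hne, fun g => Or.inr ⟨hx g, hy g⟩⟩
    obtain ⟨x, y, hne, hg⟩ := hpair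
    obtain ⟨g, hgc⟩ := hexp x y hne
    simp only at hgc
    have hDd : (min (dist (φ g x) (φ g y)) (ρ (φ g x) + ρ (φ g y))) ≤ dist (φ g x) (φ g y) :=
      min_le_left _ _
    have hDr : (min (dist (φ g x) (φ g y)) (ρ (φ g x) + ρ (φ g y))) ≤
        ρ (φ g x) + ρ (φ g y) := min_le_right _ _
    have hgc' : c < min (dist (φ g x) (φ g y)) (ρ (φ g x) + ρ (φ g y)) := hgc
    rcases hg g with h | h
    · have h21 : 2 * (1 / ((n : ℝ) + 1)) = 2 / ((n : ℝ) + 1) := by ring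
      linarith
    · have hρx := hdecay n _ h.1
      have hρy := hdecay n _ h.2
      have h21 : 2 / ((n : ℝ) + 1) = 1 / ((n : ℝ) + 1) + 1 / ((n : ℝ) + 1) := by ring
      linarith

/-- For an action of a group `G` on a locally compact, σ-compact metrizable space `X`,
metric-independent expansiveness is equivalent to cocompact expansiveness. -/
theorem mie_iff_cocompactlyExpansive {G X : Type*} [Group G] [TopologicalSpace X]
    [TopologicalSpace.MetrizableSpace X] [LocallyCompactSpace X] [SigmaCompactSpace X]
    (φ : G → X → X) (hone : ∀ x : X, φ 1 x = x)
    (hmul : ∀ (g h : G) (x : X), φ (g * h) x = φ g (φ h x)) :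
    MIE φ ↔ CocompactlyExpansive φ := by
  constructor
  · intro hMIE
    by_contra hCE
    obtain ⟨m₀, htop⟩ : ∃ m : MetricSpace X, m.toUniformSpace.toTopologicalSpace = ‹TopologicalSpace X› :=
      ⟨TopologicalSpace.metrizableSpaceMetric X, rfl⟩
    have hlc : @LocallyCompactSpace X m₀.toUniformSpace.toTopologicalSpace := by
      rw [htop]; infer_instance
    have hsc : @SigmaCompactSpace X m₀.toUniformSpace.toTopologicalSpace := by
      rw [htop]; infer_instance
    have hCE' : ¬ @CocompactlyExpansive G X m₀.toUniformSpace.toTopologicalSpace φ := by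
      rw [htop]; exact hCE
    obtain ⟨m, hm, hnexp⟩ := @not_expansive_aux G X _ m₀ hlc hsc φ hone hmul hCE'
    exact hnexp (hMIE m (hm.trans htop))
  · intro hCE m hm
    have hCE' : @CocompactlyExpansive G X m.toUniformSpace.toTopologicalSpace φ := by
      rw [hm]; exact hCE
    exact @expansiveWith_of_CE G X m φ hCE'
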